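/- arXiv:0708.2883 — 2 statements merged into one kernel-verified Lean document; each statement's English description precedes it below -/
import Mathlib

section
/- Let Ω ⊆ ℝ be compact with infinitely many connected components (equivalently λ(Ω) = ∞). Then for every n ≥ 3 we have d_n(Ω) = n: one can always find an n-dimensional subspace of polynomials of degree at most n on Ω with a positive basis, and n cannot be lowered. -/
/-- `PosBasisWithDeg Ω n d` : there is an `n`-dimensional subspace of `C(Ω)` consisting
of (restrictions of) polynomial functions with an `n`-element positive basis all of whose
elements are polynomials of degree at most `d`. -/
def PosBasisWithDeg (Ω : Set ℝ) (n d : ℕ) : Prop :=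
  ∃ bb : Fin n → (Ω → ℝ),
    (∀ i, ∃ p : Polynomial ℝ, p.natDegree ≤ d ∧ ∀ x : Ω, bb i x = p.eval (x : ℝ)) ∧
    LinearIndependent ℝ bb ∧
    ∀ f ∈ Submodule.span ℝ (Set.range bb),
      ((∀ x : Ω, 0 ≤ f x) ↔ ∃ c : Fin n → ℝ, (∀ i, 0 ≤ c i) ∧ f = ∑ i, c i • bb i)

open Polynomial Set

namespace DnAux


/-- restriction of polynomials to `Ω` as a linear map -/
noncomputable def restr (Ω : Set ℝ) : Polynomial ℝ →ₗ[ℝ] (Ω → ℝ) where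
  toFun p := fun x => p.eval (x : ℝ)
  map_add' p q := by funext x; simp
  map_smul' c p := by funext x; simp

@[simp] lemma restr_apply (Ω : Set ℝ) (p : Polynomial ℝ) (x : Ω) :
    restr Ω p x = p.eval (x : ℝ) := rfl

lemma restr_inj {Ω : Set ℝ} (hΩ : Ω.Infinite) {p : Polynomial ℝ}
    (hp : restr Ω p = 0) : p = 0 := by
  refine p.eq_zero_of_infinite_isRoot (hΩ.mono ?_)
  intro x hx
  have := congrFun hp ⟨x, hx⟩
  simpa [IsRoot] using this

open Classical in
/-- a representative-choosing function for components -/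
noncomputable def rep (Ω : Set ℝ) (C : Set ℝ) : ℝ :=
  if h : ∃ x ∈ Ω, C = connectedComponentIn Ω x then h.choose else 0

lemma rep_spec {Ω : Set ℝ} {C : Set ℝ} (h : ∃ x ∈ Ω, C = connectedComponentIn Ω x) :
    rep Ω C ∈ Ω ∧ C = connectedComponentIn Ω (rep Ω C) := by
  classical
  rw [rep]
  rw [dif_pos h]
  exact ⟨h.choose_spec.1, h.choose_spec.2⟩

lemma omega_infinite {Ω : Set ℝ}
    (hcomp : {C : Set ℝ | ∃ x ∈ Ω, C = connectedComponentIn Ω x}.Infinite) :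
    Ω.Infinite := by
  apply Set.infinite_of_injOn_mapsTo (f := rep Ω)
    (s := {C : Set ℝ | ∃ x ∈ Ω, C = connectedComponentIn Ω x}) ?_ ?_ hcomp
  · intro C hC D hD hCD
    have h1 := rep_spec hC
    have h2 := rep_spec hD
    rw [h1.2, h2.2, hCD]
  · intro C hC
    exact (rep_spec hC).1

/-- arbitrarily many points of `Ω` in pairwise distinct components -/
lemma exists_points {Ω : Set ℝ}
    (hcomp : {C : Set ℝ | ∃ x ∈ Ω, C = connectedComponentIn Ω x}.Infinite)
    (M : ℕ) :
    ∃ y : Fin M → ℝ, StrictMono y ∧ (∀ i, y i ∈ Ω) ∧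
      ∀ i j, connectedComponentIn Ω (y i) = connectedComponentIn Ω (y j) → i = j := by
  classical
  obtain ⟨T, hTsub, hTcard⟩ := hcomp.exists_subset_card_eq M
  set F : Finset ℝ := T.image (rep Ω) with hF
  have hinj : Set.InjOn (rep Ω) T := by
    intro C hC D hD hCD
    have h1 := rep_spec (hTsub hC)
    have h2 := rep_spec (hTsub hD)
    rw [h1.2, h2.2, hCD]
  have hFcard : F.card = M := by
    rw [hF, Finset.card_image_of_injOn hinj, hTcard]
  have hrep : ∀ u ∈ F, u ∈ Ω ∧ connectedComponentIn Ω u ∈ T := by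
    intro u hu
    rw [hF, Finset.mem_image] at hu
    obtain ⟨C, hC, rfl⟩ := hu
    obtain ⟨h1, h2⟩ := rep_spec (hTsub hC)
    exact ⟨h1, by rwa [← h2]⟩
  have hrep2 : ∀ u ∈ F, ∀ v ∈ F, connectedComponentIn Ω u = connectedComponentIn Ω v → u = v := by
    intro u hu v hv huv
    rw [hF, Finset.mem_image] at hu hv
    obtain ⟨C, hC, rfl⟩ := hu
    obtain ⟨D, hD, rfl⟩ := hv
    have h1 := rep_spec (hTsub hC)
    have h2 := rep_spec (hTsub hD)
    congr 1
    rw [h1.2, h2.2, huv]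
  set e := F.orderIsoOfFin hFcard with he
  refine ⟨fun i => (e i : ℝ), ?_, ?_, ?_⟩
  · intro i j hij
    exact_mod_cast e.strictMono hij
  · intro i
    exact (hrep _ (e i).2).1
  · intro i j hij
    have : ((e i : ℝ)) = ((e j : ℝ)) := hrep2 _ (e i).2 _ (e j).2 hij
    have : e i = e j := Subtype.ext this
    exact e.injective this

lemma exists_gap {Ω : Set ℝ} (hcl : IsClosed Ω) {u v : ℝ} (hu : u ∈ Ω) (hv : v ∈ Ω)
    (huv : u < v)
    (hcc : connectedComponentIn Ω u ≠ connectedComponentIn Ω v) :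
    ∃ a b : ℝ, a ∈ Ω ∧ b ∈ Ω ∧ u ≤ a ∧ a < b ∧ b ≤ v ∧
      ∀ y ∈ Ω, y ∉ Set.Ioo a b := by
  -- find a point z between u and v that is not in Ω
  have hz : ∃ z, u < z ∧ z < v ∧ z ∉ Ω := by
    by_contra h
    push_neg at h
    have hsub : Set.Icc u v ⊆ Ω := by
      intro x hx
      rcases eq_or_lt_of_le hx.1 with h1 | h1
      · rwa [← h1]
      rcases eq_or_lt_of_le hx.2 with h2 | h2
      · rwa [h2]
      exact h x h1 h2
    have h1 : Set.Icc u v ⊆ connectedComponentIn Ω u :=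
      isPreconnected_Icc.subset_connectedComponentIn (Set.left_mem_Icc.2 huv.le) hsub
    exact hcc (connectedComponentIn_eq (h1 (Set.right_mem_Icc.2 huv.le)))
  obtain ⟨z, huz, hzv, hzΩ⟩ := hz
  set a := sSup (Ω ∩ Set.Iic z) with ha
  set b := sInf (Ω ∩ Set.Ici z) with hb
  have hane : (Ω ∩ Set.Iic z).Nonempty := ⟨u, hu, huz.le⟩
  have habd : BddAbove (Ω ∩ Set.Iic z) := ⟨z, fun x hx => hx.2⟩
  have hbne : (Ω ∩ Set.Ici z).Nonempty := ⟨v, hv, hzv.le⟩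
  have hbbd : BddBelow (Ω ∩ Set.Ici z) := ⟨z, fun x hx => hx.2⟩
  have hamem : a ∈ Ω ∩ Set.Iic z :=
    (hcl.inter isClosed_Iic).csSup_mem hane habd
  have hbmem : b ∈ Ω ∩ Set.Ici z :=
    (hcl.inter isClosed_Ici).csInf_mem hbne hbbd
  have haz : a < z := lt_of_le_of_ne hamem.2 (fun h => hzΩ (h ▸ hamem.1))
  have hzb : z < b := lt_of_le_of_ne (hbmem.2) (fun h => hzΩ (h.symm ▸ hbmem.1))
  refine ⟨a, b, hamem.1, hbmem.1, le_csSup habd ⟨hu, huz.le⟩, haz.trans hzb,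
    csInf_le hbbd ⟨hv, hzv.le⟩, ?_⟩
  intro y hy hyos
  rcases le_total y z with h1 | h1
  · exact absurd (le_csSup habd ⟨hy, h1⟩) (not_le.2 hyos.1)
  · exact absurd (csInf_le hbbd ⟨hy, h1⟩) (not_le.2 hyos.2)


/-- main gap-supply lemma: `N` separated gaps of `Ω`, all to the right of `m = min Ω`. -/
lemma exists_gaps (hc : IsCompact Ω)
    (hcomp : {C : Set ℝ | ∃ x ∈ Ω, C = connectedComponentIn Ω x}.Infinite)
    (N : ℕ) :
    ∃ (m : ℝ) (a b : ℕ → ℝ), m ∈ Ω ∧ (∀ y ∈ Ω, m ≤ y) ∧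
      (∀ k, k < N → a k ∈ Ω ∧ b k ∈ Ω ∧ a k < b k ∧ m < a k ∧
        ∀ y ∈ Ω, y ∉ Set.Ioo (a k) (b k)) ∧
      (∀ k l, k < l → l < N → b k < a l) := by
  classical
  obtain ⟨y0, hymono, hyΩ0, hycc⟩ := exists_points hcomp (2 * N + 2)
  set y : ℕ → ℝ := fun i => y0 ⟨min i (2 * N + 1), by omega⟩ with hy
  have hyΩ : ∀ i, y i ∈ Ω := fun i => hyΩ0 _
  have hymono' : ∀ i j, i < j → j ≤ 2 * N + 1 → y i < y j := by
    intro i j hij hj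
    apply hymono
    simp [Fin.lt_def]
    omega
  have hΩne : Ω.Nonempty := ⟨y 0, hyΩ _⟩
  obtain ⟨m, hmΩ, hmlb⟩ := hc.exists_isLeast hΩne
  -- for each k < N, a gap between y (2k+1) and y (2k+2)
  have hgap : ∀ k : ℕ, ∃ a b : ℝ, k < N → (a ∈ Ω ∧ b ∈ Ω ∧
      y (2 * k + 1) ≤ a ∧ a < b ∧ b ≤ y (2 * k + 2) ∧
      ∀ z ∈ Ω, z ∉ Set.Ioo a b) := by
    intro k
    by_cases hk : k < N
    · have hcc2 : connectedComponentIn Ω (y (2 * k + 1)) ≠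
          connectedComponentIn Ω (y (2 * k + 2)) := by
        intro h
        have := hycc _ _ h
        simp [Fin.ext_iff] at this
        omega
      obtain ⟨a, b, h⟩ := exists_gap hc.isClosed (hyΩ _) (hyΩ _)
        (hymono' _ _ (by omega) (by omega)) hcc2
      exact ⟨a, b, fun _ => h⟩
    · exact ⟨0, 0, fun h => absurd h hk⟩
  choose a b hab using hgap
  refine ⟨m, a, b, hmΩ, fun z hz => hmlb hz, ?_, ?_⟩
  · intro k hk
    obtain ⟨h1, h2, h3, h4, h5, h6⟩ := hab k hk
    refine ⟨h1, h2, h4, ?_, h6⟩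
    calc m ≤ y 0 := hmlb (hyΩ _)
      _ < y (2 * k + 1) := hymono' _ _ (by omega) (by omega)
      _ ≤ a k := h3
  · intro k l hkl hl
    obtain ⟨_, _, _, _, h5, _⟩ := hab k (hkl.trans hl)
    obtain ⟨_, _, h3', _, _, _⟩ := hab l hl
    calc b k ≤ y (2 * k + 2) := h5
      _ < y (2 * l + 1) := hymono' _ _ (by omega) (by omega)
      _ ≤ a l := h3'




/-- abstract construction of a positive basis from "Lagrange-like" polynomials -/
lemma construction {Ω : Set ℝ} {n : ℕ} (x : Fin n → ℝ) (hx : ∀ i, x i ∈ Ω)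
    (P : Fin n → Polynomial ℝ)
    (hdeg : ∀ i, (P i).natDegree ≤ n)
    (hnn : ∀ i, ∀ y ∈ Ω, 0 ≤ (P i).eval y)
    (hzero : ∀ i j, i ≠ j → (P i).eval (x j) = 0)
    (hpos : ∀ i, 0 < (P i).eval (x i)) :
    PosBasisWithDeg Ω n n := by
  classical
  set v : Fin n → ℝ := fun i => (P i).eval (x i) with hv
  set bb : Fin n → (Ω → ℝ) := fun i => fun t => (v i)⁻¹ * (P i).eval (t : ℝ) with hbb
  have hbbval : ∀ i j, bb i ⟨x j, hx j⟩ = if i = j then 1 else 0 := by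
    intro i j
    by_cases h : i = j
    · subst h
      simp [hbb, inv_mul_cancel₀ (hpos i).ne']
      exact inv_mul_cancel₀ (hpos i).ne'
    · simp [hbb, h, hzero i j h]
  have hbbnn : ∀ i, ∀ t : Ω, 0 ≤ bb i t := by
    intro i t
    exact mul_nonneg (inv_nonneg.2 (hpos i).le) (hnn i t t.2)
  have hsum : ∀ (c : Fin n → ℝ) (j : Fin n),
      (∑ i, c i • bb i) ⟨x j, hx j⟩ = c j := by
    intro c j
    rw [Finset.sum_apply]
    rw [Finset.sum_eq_single j]
    · simp [hbbval]
    · intro i _ hij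
      simp [hbbval, hij]
    · simp
  have hli : LinearIndependent ℝ bb := by
    rw [Fintype.linearIndependent_iff]
    intro g hg j
    have := congrFun hg ⟨x j, hx j⟩
    rw [hsum g j] at this
    simpa using this
  refine ⟨bb, ?_, hli, ?_⟩
  · intro i
    refine ⟨C (v i)⁻¹ * P i, le_trans (natDegree_C_mul_le _ _) (hdeg i), ?_⟩
    intro t
    simp [hbb]
  · intro f hf
    constructor
    · intro hfnn
      obtain ⟨c, hc⟩ := (Submodule.mem_span_range_iff_exists_fun ℝ).mp hf
      have hcval : ∀ j, c j = f ⟨x j, hx j⟩ := by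
        intro j
        rw [← hc, hsum]
      exact ⟨c, fun j => (hcval j) ▸ hfnn _, hc.symm⟩
    · rintro ⟨c, hcnn, rfl⟩ t
      rw [Finset.sum_apply]
      apply Finset.sum_nonneg
      intro i _
      have : (c i • bb i) t = c i * bb i t := rfl
      rw [this]
      exact mul_nonneg (hcnn i) (hbbnn i t)


/-- the quadratic with roots `a`, `b` -/
noncomputable def Qp (a b : ℝ) : Polynomial ℝ := (X - C a) * (X - C b)

lemma Qp_eval (a b y : ℝ) : (Qp a b).eval y = (y - a) * (y - b) := by
  simp [Qp]

lemma Qp_natDegree_le (a b : ℝ) : (Qp a b).natDegree ≤ 2 := by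
  refine le_trans (natDegree_mul_le) ?_
  have h1 := natDegree_X_sub_C_le (R := ℝ) a
  have h2 := natDegree_X_sub_C_le (R := ℝ) b
  omega

lemma not_Ioo {a b y : ℝ} (h : y ∉ Set.Ioo a b) : y ≤ a ∨ b ≤ y := by
  simp only [Set.mem_Ioo, not_and, not_lt] at h
  rcases le_or_gt y a with h1 | h1
  · exact Or.inl h1
  · exact Or.inr (h h1)

/-- main upper-bound construction -/
lemma upper {Ω : Set ℝ} {n : ℕ} (hn : 3 ≤ n) (m : ℝ) (a b : ℕ → ℝ) (hm : m ∈ Ω)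
    (hmlb : ∀ y ∈ Ω, m ≤ y)
    (hgap : ∀ k, k < n → a k ∈ Ω ∧ b k ∈ Ω ∧ a k < b k ∧ m < a k ∧
      ∀ y ∈ Ω, y ∉ Set.Ioo (a k) (b k))
    (hsep : ∀ k l, k < l → l < n → b k < a l) :
    PosBasisWithDeg Ω n n := by
  classical
  set e : ℕ := n % 2 with he
  set h : ℕ := n / 2 with hh
  have hne : n = 2 * h + e := by omega
  have he1 : e ≤ 1 := by omega
  have hh1 : 1 ≤ h := by omega
  have hhn : h ≤ n := by omega
  -- gap facts for k < h
  have gaΩ : ∀ k, k < h → a k ∈ Ω := fun k hk => (hgap k (by omega)).1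
  have gbΩ : ∀ k, k < h → b k ∈ Ω := fun k hk => (hgap k (by omega)).2.1
  have gab : ∀ k, k < h → a k < b k := fun k hk => (hgap k (by omega)).2.2.1
  have gma : ∀ k, k < h → m < a k := fun k hk => (hgap k (by omega)).2.2.2.1
  have ghole : ∀ k, k < h → ∀ y ∈ Ω, y ≤ a k ∨ b k ≤ y :=
    fun k hk y hy => not_Ioo ((hgap k (by omega)).2.2.2.2 y hy)
  have gsep : ∀ k l, k < l → l < h → b k < a l := fun k l hkl hl => hsep k l hkl (by omega)
  set mid : ℕ → ℝ := fun k => (a k + b k) / 2 with hmid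
  have gmid1 : ∀ k, k < h → a k < mid k := by
    intro k hk; have := gab k hk; simp only [hmid]; linarith
  have gmid2 : ∀ k, k < h → mid k < b k := by
    intro k hk; have := gab k hk; simp only [hmid]; linarith
  set kk : ℕ → ℕ := fun j => (j - e) / 2 with hkk
  have hkkh : ∀ j, e ≤ j → j < n → kk j < h := by intro j h1 h2; simp only [hkk]; omega
  set node : ℕ → ℝ := fun j =>
    if j < e then m else if (j - e) % 2 = 0 then a (kk j) else b (kk j) with hnode
  set partner : ℕ → ℝ := fun j =>
    if (j - e) % 2 = 0 then b (kk j) else a (kk j) with hpartner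
  set P : ℕ → Polynomial ℝ := fun j =>
    if j < e then ∏ l ∈ Finset.range h, Qp (a l) (b l)
    else (X - C m) ^ e * ((X - C (partner j)) * (X - C (mid (kk j)))) *
      ∏ l ∈ (Finset.range h).erase (kk j), Qp (a l) (b l) with hP
  -- node values are in Ω
  have hnodeΩ : ∀ j, j < n → node j ∈ Ω := by
    intro j hj
    simp only [hnode]
    split_ifs with h1 h2
    · exact hm
    · exact gaΩ _ (hkkh j (by omega) hj)
    · exact gbΩ _ (hkkh j (by omega) hj)
  -- nonnegativity on Ω
  have hPnn : ∀ j, j < n → ∀ y ∈ Ω, 0 ≤ (P j).eval y := by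
    intro j hj y hy
    simp only [hP]
    split_ifs with h1
    · rw [eval_prod]
      apply Finset.prod_nonneg
      intro l hl
      rw [Finset.mem_range] at hl
      rw [Qp_eval]
      rcases ghole l hl y hy with h2 | h2
      · have := gab l hl
        nlinarith
      · have := gab l hl
        nlinarith
    · simp only [eval_mul, eval_pow, eval_sub, eval_X, eval_C, eval_prod]
      have hk := hkkh j (by omega) hj
      apply mul_nonneg (mul_nonneg ?_ ?_) ?_
      · exact pow_nonneg (by linarith [hmlb y hy]) e
      · -- (y - partner j) * (y - mid (kk j)) ≥ 0
        have hpa : a (kk j) ≤ partner j := by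
          simp only [hpartner]
          split_ifs
          · exact (gab _ hk).le
          · exact le_rfl
        have hpb : partner j ≤ b (kk j) := by
          simp only [hpartner]
          split_ifs
          · exact le_rfl
          · exact (gab _ hk).le
        rcases ghole (kk j) hk y hy with h2 | h2
        · have := gmid1 _ hk
          nlinarith
        · have := gmid2 _ hk
          nlinarith
      · apply Finset.prod_nonneg
        intro l hl
        rw [Finset.mem_erase, Finset.mem_range] at hl
        rw [Qp_eval]
        rcases ghole l hl.2 y hy with h2 | h2
        · have := gab l hl.2
          nlinarith
        · have := gab l hl.2
          nlinarith
  -- degrees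
  have hPdeg : ∀ j, j < n → (P j).natDegree ≤ n := by
    intro j hj
    have hprodle : ∀ (s : Finset ℕ), (∏ l ∈ s, Qp (a l) (b l)).natDegree ≤ 2 * s.card := by
      intro s
      refine le_trans (natDegree_prod_le s _) ?_
      refine le_trans (Finset.sum_le_card_nsmul s _ 2 ?_) ?_
      · intro l _; exact Qp_natDegree_le _ _
      · simp [mul_comm]
    simp only [hP]
    split_ifs with h1
    · refine le_trans (hprodle _) ?_
      simp only [Finset.card_range]
      omega
    · refine le_trans natDegree_mul_le ?_
      have h2 : ((X - C m) ^ e * ((X - C (partner j)) * (X - C (mid (kk j))))).natDegree ≤ e + 2 := by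
        refine le_trans natDegree_mul_le ?_
        have h3 : ((X - C m : Polynomial ℝ) ^ e).natDegree ≤ e := by
          refine le_trans (natDegree_pow_le) ?_
          have := natDegree_X_sub_C_le (R := ℝ) m
          nlinarith
        have h4 := Qp_natDegree_le (partner j) (mid (kk j))
        rw [Qp] at h4
        omega
      have h5 := hprodle ((Finset.range h).erase (kk j))
      have h6 : ((Finset.range h).erase (kk j)).card ≤ h - 1 := by
        have hmem : kk j ∈ Finset.range h := by
          rw [Finset.mem_range]
          exact hkkh j (by omega) hj
        rw [Finset.card_erase_of_mem hmem, Finset.card_range]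
      omega
  -- vanishing at other nodes
  have hzero : ∀ i j : ℕ, i < n → j < n → i ≠ j → (P i).eval (node j) = 0 := by
    intro i j hi hj hij
    by_cases h1 : i < e
    · -- P i is the full product, node j is a gap endpoint
      have hje : e ≤ j := by omega
      have hkj : kk j < h := hkkh j hje hj
      simp only [hP, if_pos h1]
      rw [eval_prod]
      apply Finset.prod_eq_zero (Finset.mem_range.2 hkj)
      rw [Qp_eval]
      simp only [hnode, if_neg (by omega : ¬ j < e)]
      split_ifs
      · simp
      · simp
    · simp only [hP, if_neg h1]
      rw [eval_mul, eval_mul, eval_pow, eval_sub, eval_X, eval_C]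
      by_cases h2 : j < e
      · -- node j = m, kills (X - C m)^e
        have hej : node j = m := by simp only [hnode, if_pos h2]
        rw [hej, sub_self, zero_pow (by omega : e ≠ 0), zero_mul, zero_mul]
      · by_cases h3 : kk i = kk j
        · -- partner root
          have hpar : node j = partner i := by
            have h3' : (i - e) / 2 = (j - e) / 2 := h3
            have hparne : (i - e) % 2 ≠ (j - e) % 2 := by
              intro hcon
              exact hij (by omega)
            simp only [hnode, hpartner, if_neg h2]
            rcases Nat.mod_two_eq_zero_or_one (i - e) with h4 | h4
            · rw [if_neg (by omega), if_pos h4, h3]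
            · rw [if_pos (by omega), if_neg (by omega), h3]
          simp only [eval_mul, eval_sub, eval_X, eval_C]
          rw [hpar]
          simp
        · -- the gap of j appears in the product
          have hkj : kk j < h := hkkh j (by omega) hj
          rw [eval_prod]
          rw [Finset.prod_eq_zero (Finset.mem_erase.2 ⟨fun hcon => h3 hcon.symm, Finset.mem_range.2 hkj⟩)
            (by
              rw [Qp_eval]
              simp only [hnode, if_neg h2]
              split_ifs
              · simp
              · simp), mul_zero]
  -- positivity at own node
  have hpos : ∀ i : ℕ, i < n → 0 < (P i).eval (node i) := by
    intro i hi
    by_cases h1 : i < e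
    · have hni : node i = m := by simp only [hnode, if_pos h1]
      simp only [hP, if_pos h1, hni]
      rw [eval_prod]
      apply Finset.prod_pos
      intro l hl
      rw [Finset.mem_range] at hl
      rw [Qp_eval]
      have h2 := gma l hl
      have h3 := gab l hl
      apply mul_pos_of_neg_of_neg <;> linarith
    · have hki : kk i < h := hkkh i (by omega) hi
      have hma := gma _ hki
      have hab := gab _ hki
      have hm1 := gmid1 _ hki
      have hm2 := gmid2 _ hki
      have hnival : node i = a (kk i) ∨ node i = b (kk i) := by
        simp only [hnode, if_neg h1]
        split_ifs
        · exact Or.inl rfl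
        · exact Or.inr rfl
      have hnia : a (kk i) ≤ node i := by
        rcases hnival with h2 | h2 <;> rw [h2]
        · linarith
      have hnib : node i ≤ b (kk i) := by
        rcases hnival with h2 | h2 <;> rw [h2]
        · linarith
      simp only [hP, if_neg h1]
      rw [eval_mul, eval_mul, eval_pow, eval_sub, eval_X, eval_C, eval_mul, eval_sub, eval_sub,
        eval_X, eval_C, eval_C, eval_prod]
      apply mul_pos (mul_pos ?_ ?_) ?_
      · apply pow_pos
        linarith
      · -- (node i - partner i) * (node i - mid (kk i)) > 0
        simp only [hnode, hpartner, if_neg h1]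
        split_ifs with h2
        · apply mul_pos_of_neg_of_neg <;> linarith
        · apply mul_pos <;> linarith
      · apply Finset.prod_pos
        intro l hl
        rw [Finset.mem_erase, Finset.mem_range] at hl
        rw [Qp_eval]
        have habl := gab l hl.2
        rcases lt_or_gt_of_ne hl.1 with h2 | h2
        · -- l < kk i : b l < a (kk i) ≤ node i
          have := gsep l (kk i) h2 hki
          apply mul_pos <;> linarith
        · -- kk i < l : node i ≤ b (kk i) < a l
          have := gsep (kk i) l h2 hl.2
          apply mul_pos_of_neg_of_neg <;> linarith
  exact construction (fun i => node i.1) (fun i => hnodeΩ _ i.2) (fun i => P i.1)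
    (fun i => hPdeg _ i.2) (fun i y hy => hPnn _ i.2 y hy)
    (fun i j hij => hzero _ _ i.2 j.2 (fun hcon => hij (Fin.ext hcon)))
    (fun i => hpos _ i.2)


lemma poly_zero_of_roots {p : Polynomial ℝ} (W : Finset ℝ) (hW : ∀ w ∈ W, p.eval w = 0)
    (hcard : p.natDegree < W.card) : p = 0 := by
  by_contra hp
  have hsub : W ⊆ p.roots.toFinset := by
    intro w hw
    rw [Multiset.mem_toFinset, mem_roots hp]
    exact hW w hw
  have h1 := Finset.card_le_card hsub
  have h2 := Multiset.toFinset_card_le p.roots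
  have h3 := p.card_roots'
  omega

lemma natDegree_lt_of_coeff {p : Polynomial ℝ} {k : ℕ} (h : p.natDegree ≤ k)
    (hc : p.coeff k = 0) (hp : p ≠ 0) : p.natDegree < k := by
  rcases lt_or_eq_of_le h with h1 | h1
  · exact h1
  · exfalso
    apply hp
    rw [← leadingCoeff_eq_zero, leadingCoeff, h1]
    exact hc

lemma dep_of_common_roots {n1 : ℕ} {p q : Polynomial ℝ}
    (hp : p.natDegree ≤ n1) (hq : q.natDegree ≤ n1)
    (W : Finset ℝ) (hWcard : n1 ≤ W.card)
    (hvp : ∀ w ∈ W, p.eval w = 0) (hvq : ∀ w ∈ W, q.eval w = 0) :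
    ∃ α β : ℝ, (α ≠ 0 ∨ β ≠ 0) ∧ α • p + β • q = 0 := by
  by_cases hc : q.coeff n1 = 0 ∧ p.coeff n1 = 0
  · -- then p = 0
    have hp0 : p = 0 := by
      by_contra hp0
      have := natDegree_lt_of_coeff hp hc.2 hp0
      exact hp0 (poly_zero_of_roots W hvp (by omega))
    exact ⟨1, 0, Or.inl one_ne_zero, by simp [hp0]⟩
  · set r : Polynomial ℝ := q.coeff n1 • p - p.coeff n1 • q with hr
    have hrdeg : r.natDegree ≤ n1 := by
      refine le_trans (natDegree_sub_le _ _) ?_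
      have h1 := natDegree_smul_le (q.coeff n1) p
      have h2 := natDegree_smul_le (p.coeff n1) q
      omega
    have hrcoeff : r.coeff n1 = 0 := by
      simp only [hr, coeff_sub, coeff_smul, smul_eq_mul]
      ring
    have hr0 : r = 0 := by
      by_contra hr0
      have hlt := natDegree_lt_of_coeff hrdeg hrcoeff hr0
      apply hr0
      apply poly_zero_of_roots W ?_ (by omega)
      intro w hw
      simp only [hr, eval_sub, eval_smul, smul_eq_mul, hvp w hw, hvq w hw]
      ring
    refine ⟨q.coeff n1, -(p.coeff n1), ?_, ?_⟩
    · rcases not_and_or.mp hc with h1 | h1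
      · exact Or.inl h1
      · exact Or.inr (by simpa using h1)
    · rw [← hr0, hr, neg_smul, sub_eq_add_neg]

lemma pair_contra {Ω : Set ℝ} {n : ℕ} {bb : Fin n → (Ω → ℝ)} (hli : LinearIndependent ℝ bb)
    {i j : Fin n} (hij : i ≠ j) {α β : ℝ} (hne : α ≠ 0 ∨ β ≠ 0)
    (h : α • bb i + β • bb j = 0) : False := by
  have hinj : Function.Injective ![i, j] := by
    intro s t hst
    fin_cases s <;> fin_cases t
    · rfl
    · exact absurd hst hij
    · exact absurd hst.symm hij
    · rfl
  have hpair : LinearIndependent ℝ (bb ∘ ![i, j]) := hli.comp _ hinj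
  have heq : bb ∘ ![i, j] = ![bb i, bb j] := by
    funext s
    fin_cases s <;> simp
  rw [heq] at hpair
  have := (LinearIndependent.pair_iff.mp hpair) α β h
  rcases hne with h1 | h1
  · exact h1 this.1
  · exact h1 this.2

set_option maxHeartbeats 2000000 in
lemma lower {Ω : Set ℝ} {n : ℕ} (hn : 3 ≤ n) (hΩ : Ω.Infinite)
    (m : ℝ) (a b : ℕ → ℝ) (hm : m ∈ Ω) (hmlb : ∀ y ∈ Ω, m ≤ y)
    (hgap : ∀ k, k < (n + 1) * ((n - 1) / 2) → a k ∈ Ω ∧ b k ∈ Ω ∧ a k < b k ∧ m < a k ∧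
      ∀ y ∈ Ω, y ∉ Set.Ioo (a k) (b k))
    (hsep : ∀ k l, k < l → l < (n + 1) * ((n - 1) / 2) → b k < a l)
    {d : ℕ} (hdn : d < n) (hPB : PosBasisWithDeg Ω n d) : False := by
  classical
  set n1 : ℕ := n - 1 with hn1
  set h' : ℕ := (n - 1) / 2 with hh'
  set e : ℕ := (n - 1) % 2 with he
  have hpar : n1 = 2 * h' + e := by omega
  have he1 : e ≤ 1 := by omega
  have hh1 : 1 ≤ h' := by omega
  set N : ℕ := (n + 1) * h' with hN
  have hidx : ∀ k i : ℕ, k ≤ n → i < h' → k * h' + i < N := by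
    intro k i hk hi
    have h1 : k * h' + i < (k + 1) * h' := by
      rw [add_mul, one_mul]; omega
    have h2 : (k + 1) * h' ≤ (n + 1) * h' := Nat.mul_le_mul_right _ (by omega)
    omega
  obtain ⟨bb, hpoly, hli, hcone⟩ := hPB
  choose p hpdeg hpev using hpoly
  have hbb_eq : ∀ i, bb i = restr Ω (p i) := fun i => funext (fun x => hpev i x)
  -- each bb i is nonnegative on Ω
  have hsingle : ∀ t : Fin n, ∑ i, (Pi.single t (1:ℝ) : Fin n → ℝ) i • bb i = bb t := by
    intro t
    rw [Finset.sum_eq_single t]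
    · simp
    · intro i _ hit
      simp [Pi.single_eq_of_ne hit]
    · simp
  have hbbnn : ∀ t : Fin n, ∀ x : Ω, 0 ≤ bb t x := by
    intro t
    apply (hcone (bb t) (Submodule.subset_span ⟨t, rfl⟩)).mpr
    refine ⟨(Pi.single t (1:ℝ) : Fin n → ℝ), ?_, (hsingle t).symm⟩
    intro i
    rcases eq_or_ne i t with h | h
    · subst h; simp
    · simp [Pi.single_eq_of_ne h]
  -- the span of bb is the space of restrictions of polys of degree < n
  set ρ := restr Ω with hρ
  set V : Submodule ℝ (Ω → ℝ) := Submodule.map ρ (degreeLT ℝ n) with hV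
  have hfd : FiniteDimensional ℝ (degreeLT ℝ n) :=
    Module.Finite.equiv (degreeLTEquiv ℝ n).symm
  have hfdV : FiniteDimensional ℝ V := Module.Finite.map _ _
  have hVrank : Module.finrank ℝ V ≤ n := by
    refine le_trans (Submodule.finrank_map_le ρ _) ?_
    rw [(degreeLTEquiv ℝ n).finrank_eq, Module.finrank_pi]
    simp
  have hmemV : ∀ q : Polynomial ℝ, q.natDegree ≤ n1 → ρ q ∈ V := by
    intro q hq
    refine ⟨q, mem_degreeLT.2 ?_, rfl⟩
    refine lt_of_le_of_lt (degree_le_natDegree) ?_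
    exact_mod_cast (by omega : q.natDegree < n)
  have hspan : Submodule.span ℝ (Set.range bb) = V := by
    apply Submodule.eq_of_le_of_finrank_le
    · rw [Submodule.span_le]
      rintro _ ⟨i, rfl⟩
      rw [hbb_eq i]
      exact hmemV _ (le_trans (hpdeg i) (by omega))
    · rw [finrank_span_eq_card hli]
      simpa using hVrank
  -- gap facts
  have gaΩ : ∀ t, t < N → a t ∈ Ω := fun t ht => (hgap t ht).1
  have gbΩ : ∀ t, t < N → b t ∈ Ω := fun t ht => (hgap t ht).2.1
  have gab : ∀ t, t < N → a t < b t := fun t ht => (hgap t ht).2.2.1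
  have gma : ∀ t, t < N → m < a t := fun t ht => (hgap t ht).2.2.2.1
  have ghole : ∀ t, t < N → ∀ y ∈ Ω, y ≤ a t ∨ b t ≤ y :=
    fun t ht y hy => not_Ioo ((hgap t ht).2.2.2.2 y hy)
  -- the extremal polynomials
  set qq : ℕ → Polynomial ℝ := fun k =>
    (X - C m) ^ e * ∏ i ∈ Finset.range h', Qp (a (k * h' + i)) (b (k * h' + i)) with hqq
  -- their designated roots
  set w : ℕ → ℕ → ℝ := fun k i =>
    if i < e then m
    else if (i - e) % 2 = 0 then a (k * h' + (i - e) / 2) else b (k * h' + (i - e) / 2) with hw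
  have hwidx : ∀ i : ℕ, e ≤ i → i < n1 → (i - e) / 2 < h' := by intro i h1 h2; omega
  have hwΩ : ∀ k i, k ≤ n → i < n1 → w k i ∈ Ω := by
    intro k i hk hi
    simp only [hw]
    split_ifs with h1 h2
    · exact hm
    · exact gaΩ _ (hidx k _ hk (hwidx i (by omega) hi))
    · exact gbΩ _ (hidx k _ hk (hwidx i (by omega) hi))
  have hwmono : ∀ k i j, k ≤ n → i < j → j < n1 → w k i < w k j := by
    intro k i j hk hij hj
    have hjble : ∀ i', e ≤ i' → i' < n1 →
        a (k * h' + (i' - e) / 2) ≤ w k i' ∧ w k i' ≤ b (k * h' + (i' - e) / 2) := by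
      intro i' h1 h2
      have hab' := gab _ (hidx k _ hk (hwidx i' h1 h2))
      simp only [hw, if_neg (by omega : ¬ i' < e)]
      split_ifs
      · exact ⟨le_refl _, hab'.le⟩
      · exact ⟨hab'.le, le_refl _⟩
    by_cases h1 : i < e
    · -- w k i = m
      have h2 : ¬ j < e := by omega
      have h3 := hjble j (by omega) hj
      have h4 := gma _ (hidx k _ hk (hwidx j (by omega) hj))
      simp only [hw, if_pos h1]
      linarith [h3.1]
    · have h2 : ¬ j < e := by omega
      have h3 := hjble i (by omega) (by omega)
      have h4 := hjble j (by omega) hj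
      by_cases h5 : (i - e) / 2 = (j - e) / 2
      · -- same gap, i is the 'a' and j is the 'b'
        have h6 : (i - e) % 2 = 0 ∧ (j - e) % 2 = 1 := by omega
        simp only [hw, if_neg h1, if_neg h2, if_pos h6.1, h5, if_neg (by omega : ¬ (j - e) % 2 = 0)]
        exact gab _ (hidx k _ hk (hwidx j (by omega) hj))
      · have h6 : (i - e) / 2 < (j - e) / 2 := by omega
        have h7 : k * h' + (i - e) / 2 < k * h' + (j - e) / 2 := by omega
        have h8 := hsep _ _ h7 (hidx k _ hk (hwidx j (by omega) hj))
        linarith [h3.2, h4.1]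
  have hwvanish : ∀ k i, i < n1 → (qq k).eval (w k i) = 0 := by
    intro k i hi
    simp only [hqq, eval_mul, eval_pow, eval_sub, eval_X, eval_C]
    by_cases h1 : i < e
    · have : w k i = m := by simp only [hw, if_pos h1]
      rw [this, sub_self, zero_pow (by omega : e ≠ 0), zero_mul]
    · rw [eval_prod]
      rw [Finset.prod_eq_zero (Finset.mem_range.2 (hwidx i (by omega) hi)), mul_zero]
      rw [Qp_eval]
      simp only [hw, if_neg h1]
      split_ifs
      · simp
      · simp
  -- the root sets
  set W : ℕ → Finset ℝ := fun k => (Finset.range n1).image (w k) with hW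
  have hWcard : ∀ k, k ≤ n → (W k).card = n1 := by
    intro k hk
    rw [hW]
    rw [Finset.card_image_of_injOn, Finset.card_range]
    intro x hx y hy hxy
    simp only [Finset.coe_range, Set.mem_Iio] at hx hy
    by_contra hne
    rcases Nat.lt_or_ge x y with h1 | h1
    · exact absurd hxy (ne_of_lt (hwmono k x y hk h1 hy))
    · have h2 : y < x := by omega
      exact absurd hxy.symm (ne_of_lt (hwmono k y x hk h2 hx))
  have hqqdeg : ∀ k, (qq k).natDegree ≤ n1 := by
    intro k
    simp only [hqq]
    refine le_trans natDegree_mul_le ?_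
    have h1 : ((X - C m : Polynomial ℝ) ^ e).natDegree ≤ e := by
      refine le_trans natDegree_pow_le ?_
      have := natDegree_X_sub_C_le (R := ℝ) m
      nlinarith
    have h2 : (∏ i ∈ Finset.range h', Qp (a (k * h' + i)) (b (k * h' + i))).natDegree ≤ 2 * h' := by
      refine le_trans (natDegree_prod_le _ _) ?_
      refine le_trans (Finset.sum_le_card_nsmul _ _ 2 (fun l _ => Qp_natDegree_le _ _)) ?_
      simp [Finset.card_range, mul_comm]
    omega
  have hqqnn : ∀ k, k ≤ n → ∀ y ∈ Ω, 0 ≤ (qq k).eval y := by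
    intro k hk y hy
    simp only [hqq, eval_mul, eval_pow, eval_sub, eval_X, eval_C, eval_prod]
    apply mul_nonneg
    · exact pow_nonneg (by linarith [hmlb y hy]) e
    · apply Finset.prod_nonneg
      intro l hl
      rw [Finset.mem_range] at hl
      have ht := hidx k l hk hl
      rw [Qp_eval]
      rcases ghole _ ht y hy with h2 | h2
      · nlinarith [gab _ ht]
      · nlinarith [gab _ ht]
  have hqqmonic : ∀ k, (qq k).Monic := by
    intro k
    apply Monic.mul
    · exact (monic_X_sub_C m).pow e
    · exact monic_prod_of_monic _ _ (fun l _ => (monic_X_sub_C _).mul (monic_X_sub_C _))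
  -- key step: each qq k is a positive multiple of a single basis element
  have hkey : ∀ k : ℕ, ∃ (i : Fin n) (γ : ℝ), k ≤ n → (0 < γ ∧ ρ (qq k) = γ • bb i) := by
    intro k
    by_cases hk : k ≤ n
    swap
    · exact ⟨⟨0, by omega⟩, 1, fun h => absurd h hk⟩
    have hmem : ρ (qq k) ∈ Submodule.span ℝ (Set.range bb) := by
      rw [hspan]; exact hmemV _ (hqqdeg k)
    have hnn : ∀ x : Ω, 0 ≤ ρ (qq k) x := fun x => hqqnn k hk x x.2
    obtain ⟨c, hcnn, hcsum⟩ := (hcone _ hmem).mp hnn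
    have hvan : ∀ t : Fin n, c t ≠ 0 → ∀ z ∈ W k, (p t).eval z = 0 := by
      intro t ht z hz
      rw [hW, Finset.mem_image] at hz
      obtain ⟨i, hi, rfl⟩ := hz
      rw [Finset.mem_range] at hi
      have hzΩ : w k i ∈ Ω := hwΩ k i hk hi
      have h0 : (∑ j, c j • bb j) ⟨w k i, hzΩ⟩ = 0 := by
        rw [← hcsum]
        simpa [hρ] using (hwvanish k i hi)
      rw [Finset.sum_apply] at h0
      have hterm : ∀ j : Fin n, j ∈ Finset.univ → 0 ≤ (c j • bb j) ⟨w k i, hzΩ⟩ := by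
        intro j _
        have hrfl : (c j • bb j) ⟨w k i, hzΩ⟩ = c j * bb j ⟨w k i, hzΩ⟩ := rfl
        rw [hrfl]
        exact mul_nonneg (hcnn j) (hbbnn j _)
      have h2 : (c t • bb t) ⟨w k i, hzΩ⟩ = 0 :=
        (Finset.sum_eq_zero_iff_of_nonneg hterm).mp h0 t (Finset.mem_univ t)
      have h2' : c t * bb t ⟨w k i, hzΩ⟩ = 0 := h2
      have h3 : bb t ⟨w k i, hzΩ⟩ = 0 := by
        rcases mul_eq_zero.mp h2' with h | h
        · exact absurd h ht
        · exact h
      rw [hpev t] at h3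
      exact h3
    have hex : ∃ t : Fin n, c t ≠ 0 := by
      by_contra hno
      push_neg at hno
      have hz : ρ (qq k) = 0 := by
        rw [hcsum]
        exact Finset.sum_eq_zero (fun j _ => by rw [hno j, zero_smul])
      exact (hqqmonic k).ne_zero (restr_inj hΩ hz)
    obtain ⟨t0, ht0⟩ := hex
    have huniq : ∀ t : Fin n, t ≠ t0 → c t = 0 := by
      intro t htne
      by_contra ht
      obtain ⟨α, β, hαβ, hsum0⟩ := dep_of_common_roots (n1 := n1)
        (le_trans (hpdeg t) (by omega)) (le_trans (hpdeg t0) (by omega))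
        (W k) (le_of_eq (hWcard k hk).symm) (hvan t ht) (hvan t0 ht0)
      apply pair_contra hli htne hαβ
      calc α • bb t + β • bb t0 = ρ (α • p t + β • p t0) := by
            rw [map_add, map_smul, map_smul, hbb_eq t, hbb_eq t0]
        _ = 0 := by rw [hsum0, map_zero]
    refine ⟨t0, c t0, fun _ => ⟨lt_of_le_of_ne (hcnn t0) (Ne.symm ht0), ?_⟩⟩
    rw [hcsum]
    rw [Finset.sum_eq_single t0]
    · intro j _ hj
      rw [huniq j hj, zero_smul]
    · simp
  choose I γf hIγ using hkey
  -- final contradiction for an ordered pair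
  have final : ∀ k k' : ℕ, k < k' → k' ≤ n → I k = I k' → False := by
    intro k k' hlt hk'n hII
    have hkn : k ≤ n := by omega
    obtain ⟨hγ1, hq1⟩ := hIγ k hkn
    obtain ⟨hγ2, hq2⟩ := hIγ k' hk'n
    have hres : ρ (γf k' • qq k - γf k • qq k') = 0 := by
      rw [map_sub, map_smul, map_smul, hq1, hq2, hII, smul_smul, smul_smul, mul_comm, sub_self]
    have hpoly0 : γf k' • qq k = γf k • qq k' := sub_eq_zero.mp (restr_inj hΩ hres)
    set z := a (k * h') with hz
    have hzN : k * h' < N := by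
      have := hidx k 0 hkn (by omega)
      omega
    have hqkz : (qq k).eval z = 0 := by
      simp only [hqq, eval_mul, eval_prod]
      rw [Finset.prod_eq_zero (Finset.mem_range.2 (by omega : (0:ℕ) < h')), mul_zero]
      rw [Qp_eval]
      simp [hz]
    have hne0 : (qq k').eval z ≠ 0 := by
      simp only [hqq, eval_mul, eval_pow, eval_sub, eval_X, eval_C, eval_prod]
      apply mul_ne_zero
      · apply pow_ne_zero
        have := gma _ hzN
        rw [hz]
        exact sub_ne_zero.2 (by linarith)
      · rw [Finset.prod_ne_zero_iff]
        intro i hi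
        rw [Finset.mem_range] at hi
        have ht2 : k' * h' + i < N := hidx k' i hk'n hi
        have hlt2 : k * h' < k' * h' + i := by
          have h1 : k * h' < (k + 1) * h' := by rw [add_mul, one_mul]; omega
          have h2 : (k + 1) * h' ≤ k' * h' := Nat.mul_le_mul_right _ (by omega)
          omega
        have hsep2 := hsep _ _ hlt2 ht2
        have hab1 := gab _ hzN
        have hab2 := gab _ ht2
        rw [Qp_eval]
        apply mul_ne_zero
        · exact sub_ne_zero.2 (by rw [hz]; linarith)
        · exact sub_ne_zero.2 (by rw [hz]; linarith)
    have heval := congrArg (fun pp : Polynomial ℝ => pp.eval z) hpoly0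
    simp only [eval_smul, smul_eq_mul, hqkz, mul_zero] at heval
    rcases mul_eq_zero.mp heval.symm with h | h
    · exact hγ1.ne' h
    · exact hne0 h
  -- pigeonhole
  obtain ⟨k, hk, k', hk', hne', hII⟩ := Finset.exists_ne_map_eq_of_card_lt_of_maps_to
    (s := Finset.range (n + 1)) (t := (Finset.univ : Finset (Fin n)))
    (by simp) (fun x _ => Finset.mem_univ (I x))
  rw [Finset.mem_range] at hk hk'
  rcases Ne.lt_or_gt hne' with h | h
  · exact final k k' h (by omega) hII
  · exact final k' k h (by omega) hII.symm


end DnAux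

/-- If compact `Ω ⊆ ℝ` has infinitely many connected components (`λ(Ω) = ∞`), then for
every `n ≥ 3` we have `d_n(Ω) = n`. -/
theorem dn_lambda_infinite (Ω : Set ℝ) (hc : IsCompact Ω)
    (hcomp : {C : Set ℝ | ∃ x ∈ Ω, C = connectedComponentIn Ω x}.Infinite)
    (n : ℕ) (hn : 3 ≤ n) :
    IsLeast {d | PosBasisWithDeg Ω n d} n := by
  constructor
  · obtain ⟨m, a, b, hm, hmlb, hgap, hsep⟩ := DnAux.exists_gaps hc hcomp n
    exact DnAux.upper hn m a b hm hmlb hgap hsep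
  · intro d hd
    by_contra hlt
    push_neg at hlt
    obtain ⟨m, a, b, hm, hmlb, hgap, hsep⟩ :=
      DnAux.exists_gaps hc hcomp ((n + 1) * ((n - 1) / 2))
    exact DnAux.lower hn (DnAux.omega_infinite hcomp) m a b hm hmlb hgap hsep hlt hd
end

section
/- Let Ω ⊆ ℝ be an infinite compact set with λ(Ω) = 0 (i.e., Ω is an interval [a,b] with a < b) and n ≥ 3. Then d_n(Ω) = 2n - 3: the minimal possible maximal degree of an n-element positive basis of an n-dimensional subspace of polynomial functions on [a,b] equals 2n-3. -/
open Polynomial Filter Topology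

private lemma core_rm {s : ℝ[X]} (hs : s ≠ 0) {t : ℝ} {N : ℕ} {x : ℕ → ℝ}
    (hxt : Tendsto x atTop (nhds t)) (hne : ∀ k, x k ≠ t)
    (hpos : ∀ k, 0 ≤ s.eval (x k))
    (hlim : Tendsto (fun k => s.eval (x k) / |x k - t| ^ N) atTop (nhds 0)) :
    N < s.rootMultiplicity t := by
  by_contra h
  push_neg at h
  set α := s.rootMultiplicity t with hα
  set u := s /ₘ (X - C t) ^ α with hu
  have hut : u.eval t ≠ 0 := eval_divByMonic_pow_rootMultiplicity_ne_zero t hs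
  have hfac : ∀ y : ℝ, s.eval y = (y - t) ^ α * u.eval y := by
    intro y
    conv_lhs => rw [← pow_mul_divByMonic_rootMultiplicity_eq s t]
    simp [hu]
    rfl
  have habs : ∀ k, |u.eval (x k)| = s.eval (x k) / |x k - t| ^ α := by
    intro k
    have h1 : (0:ℝ) < |x k - t| := abs_pos.2 (sub_ne_zero.2 (hne k))
    rw [eq_div_iff (by positivity), ← abs_pow, ← abs_mul, mul_comm, ← hfac,
      abs_of_nonneg (hpos k)]
  have hd : Tendsto (fun k => |x k - t|) atTop (nhds 0) := by
    have := (hxt.sub (tendsto_const_nhds (x := t))).abs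
    simpa using this
  have hev : ∀ᶠ k in atTop, |u.eval (x k)| ≤ s.eval (x k) / |x k - t| ^ N := by
    filter_upwards [hd.eventually (gt_mem_nhds one_pos)] with k hk
    have h1 : (0:ℝ) < |x k - t| := abs_pos.2 (sub_ne_zero.2 (hne k))
    rw [habs k]
    apply div_le_div_of_nonneg_left (hpos k) (by positivity)
    exact pow_le_pow_of_le_one h1.le hk.le h
  have hu2 : Tendsto (fun k => |u.eval (x k)|) atTop (nhds |u.eval t|) :=
    ((u.continuous_aeval.tendsto t).comp hxt).abs
  have : |u.eval t| ≤ 0 := le_of_tendsto_of_tendsto hu2 hlim hev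
  exact hut (abs_eq_zero.mp (le_antisymm this (abs_nonneg _)))

private lemma tendsto_inv_nat : Tendsto (fun k : ℕ => (1:ℝ) / (k + 1)) atTop (nhds 0) :=
  tendsto_one_div_add_atTop_nhds_zero_nat

private lemma rm_lt_of_seq {p q : ℝ[X]} (hp : p ≠ 0) (hq : q ≠ 0) {t : ℝ}
    {x : ℕ → ℝ} (hxt : Tendsto x atTop (nhds t))
    (hqpos : ∀ k, 0 ≤ q.eval (x k))
    (hlt : ∀ k : ℕ, ((k : ℝ) + 1) * q.eval (x k) < p.eval (x k)) :
    p.rootMultiplicity t < q.rootMultiplicity t := by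
  have hple : ∀ k, q.eval (x k) ≤ p.eval (x k) * (1 / ((k:ℝ)+1)) := by
    intro k
    rw [mul_one_div, le_div_iff₀ (by positivity)]
    nlinarith [hlt k]
  have hpx : Tendsto (fun k => p.eval (x k)) atTop (nhds (p.eval t)) :=
    (p.continuous_aeval.tendsto t).comp hxt
  have hqx : Tendsto (fun k => q.eval (x k)) atTop (nhds (q.eval t)) :=
    (q.continuous_aeval.tendsto t).comp hxt
  have hqt0 : q.eval t = 0 := by
    have h1 : Tendsto (fun k => p.eval (x k) * (1 / ((k:ℝ)+1))) atTop (nhds 0) := by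
      simpa using hpx.mul tendsto_inv_nat
    have h2 : q.eval t ≤ 0 :=
      le_of_tendsto_of_tendsto hqx h1 (Eventually.of_forall hple)
    have h3 : 0 ≤ q.eval t := le_of_tendsto_of_tendsto tendsto_const_nhds hqx
      (Eventually.of_forall hqpos)
    linarith
  by_cases hpt : p.eval t = 0
  · -- x k ≠ t always
    have hne : ∀ k, x k ≠ t := by
      intro k hk
      have := hlt k
      rw [hk, hqt0, hpt, mul_zero] at this
      exact lt_irrefl 0 this
    set β := p.rootMultiplicity t with hβ
    set v := p /ₘ (X - C t) ^ β with hv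
    have hfac : ∀ y : ℝ, p.eval y = (y - t) ^ β * v.eval y := by
      intro y
      conv_lhs => rw [← pow_mul_divByMonic_rootMultiplicity_eq p t]
      simp [hv]
      rfl
    have hvx : Tendsto (fun k => |v.eval (x k)| * (1 / ((k:ℝ)+1))) atTop (nhds 0) := by
      simpa using (((v.continuous_aeval.tendsto t).comp hxt).abs).mul tendsto_inv_nat
    apply core_rm hq hxt hne hqpos
    apply squeeze_zero (fun k => div_nonneg (hqpos k) (by positivity)) _ hvx
    intro k
    have h1 : (0:ℝ) < |x k - t| := abs_pos.2 (sub_ne_zero.2 (hne k))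
    have hppos : 0 < p.eval (x k) := lt_of_le_of_lt (mul_nonneg (by positivity) (hqpos k)) (hlt k)
    have hpabs : p.eval (x k) = |x k - t| ^ β * |v.eval (x k)| := by
      rw [← abs_pow, ← abs_mul, ← hfac, abs_of_nonneg hppos.le]
    rw [div_le_iff₀ (by positivity)]
    calc q.eval (x k) ≤ p.eval (x k) * (1 / ((k:ℝ)+1)) := hple k
      _ = |v.eval (x k)| * (1 / ((k:ℝ)+1)) * |x k - t| ^ β := by rw [hpabs]; ring
  · have h1 : p.rootMultiplicity t = 0 := rootMultiplicity_eq_zero hpt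
    have h2 : 0 < q.rootMultiplicity t := (rootMultiplicity_pos hq).mpr hqt0
    omega

/-- a sequence in `[a,b] \ {t}` tending to `t`. -/
private lemma exists_seq {a b t : ℝ} (hab : a < b) (ht : t ∈ Set.Icc a b) :
    ∃ x : ℕ → ℝ, (∀ k, x k ∈ Set.Icc a b) ∧ (∀ k, x k ≠ t) ∧
      Tendsto x atTop (nhds t) := by
  obtain ⟨ht1, ht2⟩ := ht
  by_cases ha : a < t
  · refine ⟨fun k => t - (t - a) / (k + 2), fun k => ?_, fun k => ?_, ?_⟩
    · have h2 : (0:ℝ) < (k:ℝ) + 2 := by positivity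
      constructor
      · have : (t - a) / ((k:ℝ) + 2) ≤ t - a := by
          rw [div_le_iff₀ h2]; nlinarith
        linarith
      · have : 0 < (t - a) / ((k:ℝ) + 2) := div_pos (by linarith) (by positivity)
        linarith
    · have : 0 < (t - a) / ((k:ℝ) + 2) := div_pos (by linarith) (by positivity)
      intro h; nlinarith [h]
    · have h1 : Tendsto (fun k : ℕ => (t - a) / ((k:ℝ) + 2)) atTop (nhds 0) := by
        apply Tendsto.div_atTop (tendsto_const_nhds)
        exact tendsto_atTop_add_const_right _ _ tendsto_natCast_atTop_atTop
      have := (tendsto_const_nhds (x := t) (f := atTop (α := ℕ))).sub h1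
      simpa using this
  · have hta : t = a := le_antisymm (not_lt.mp ha) ht1
    refine ⟨fun k => a + (b - a) / (k + 2), fun k => ?_, fun k => ?_, ?_⟩
    · have h2 : (0:ℝ) < (k:ℝ) + 2 := by positivity
      constructor
      · have : 0 < (b - a) / ((k:ℝ) + 2) := div_pos (by linarith) (by positivity)
        linarith
      · have : (b - a) / ((k:ℝ) + 2) ≤ b - a := by
          rw [div_le_iff₀ h2]; nlinarith
        linarith
    · have : 0 < (b - a) / ((k:ℝ) + 2) := div_pos (by linarith) (by positivity)
      rw [hta]; intro h; nlinarith [h]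
    · have h1 : Tendsto (fun k : ℕ => (b - a) / ((k:ℝ) + 2)) atTop (nhds 0) := by
        apply Tendsto.div_atTop (tendsto_const_nhds)
        exact tendsto_atTop_add_const_right _ _ tendsto_natCast_atTop_atTop
      have := (tendsto_const_nhds (x := a) (f := atTop (α := ℕ))).add h1
      rw [hta]; simpa using this

/-- if `0 ≤ p ≤ q` on `[a,b]` then the root multiplicity of `q` at `t ∈ [a,b]`
is at most that of `p`. -/
private lemma rm_le_of_le {a b : ℝ} (hab : a < b) {p q : ℝ[X]} (hp : p ≠ 0) {t : ℝ}
    (ht : t ∈ Set.Icc a b)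
    (hle : ∀ x ∈ Set.Icc a b, 0 ≤ p.eval x ∧ p.eval x ≤ q.eval x) :
    q.rootMultiplicity t ≤ p.rootMultiplicity t := by
  set α := q.rootMultiplicity t with hα
  rcases Nat.eq_zero_or_pos α with h0 | hpos
  · omega
  by_cases hq : q = 0
  · rw [hq, rootMultiplicity_zero] at hα; omega
  obtain ⟨x, hxI, hxne, hxt⟩ := exists_seq hab ht
  set u := q /ₘ (X - C t) ^ α with hu
  have hfac : ∀ y : ℝ, q.eval y = (y - t) ^ α * u.eval y := by
    intro y
    conv_lhs => rw [← pow_mul_divByMonic_rootMultiplicity_eq q t]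
    simp [hu]
    rfl
  have key : α - 1 < p.rootMultiplicity t := by
    apply core_rm hp hxt hxne (fun k => (hle _ (hxI k)).1)
    have hg : Tendsto (fun k => |x k - t| * |u.eval (x k)|) atTop (nhds 0) := by
      have h1 : Tendsto (fun k => |x k - t|) atTop (nhds 0) := by
        simpa using (hxt.sub (tendsto_const_nhds (x := t))).abs
      have h2 := ((u.continuous_aeval.tendsto t).comp hxt).abs
      simpa using h1.mul h2
    apply squeeze_zero (fun k => div_nonneg (hle _ (hxI k)).1 (by positivity)) _ hg
    intro k
    have h1 : (0:ℝ) < |x k - t| := abs_pos.2 (sub_ne_zero.2 (hxne k))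
    have hqabs : q.eval (x k) = |x k - t| ^ α * |u.eval (x k)| := by
      rw [← abs_pow, ← abs_mul, ← hfac,
        abs_of_nonneg (le_trans (hle _ (hxI k)).1 (hle _ (hxI k)).2)]
    rw [div_le_iff₀ (by positivity)]
    calc p.eval (x k) ≤ q.eval (x k) := (hle _ (hxI k)).2
      _ = |x k - t| * |u.eval (x k)| * |x k - t| ^ (α - 1) := by
          rw [hqabs]
          have h2 : |x k - t| ^ α = |x k - t| * |x k - t| ^ (α - 1) := by
            conv_lhs => rw [show α = (α - 1) + 1 from by omega]
            rw [pow_succ']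
          rw [h2]; ring
  omega

/-- nonneg on `[a,b]`, root in the interior: even multiplicity. -/
private lemma even_rm {a b : ℝ} {p : ℝ[X]} (hp : p ≠ 0) {t : ℝ} (ht : t ∈ Set.Ioo a b)
    (hpos : ∀ x ∈ Set.Icc a b, 0 ≤ p.eval x) : Even (p.rootMultiplicity t) := by
  set m := p.rootMultiplicity t with hm
  set g := p /ₘ (X - C t) ^ m with hg
  have hgt : g.eval t ≠ 0 := eval_divByMonic_pow_rootMultiplicity_ne_zero t hp
  have hfac : ∀ y : ℝ, p.eval y = (y - t) ^ m * g.eval y := by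
    intro y
    conv_lhs => rw [← pow_mul_divByMonic_rootMultiplicity_eq p t]
    simp [hg]
    rfl
  by_contra hodd
  rw [Nat.not_even_iff_odd] at hodd
  obtain ⟨δ, hδ, hδ2⟩ := Metric.continuousAt_iff.mp (g.continuous.continuousAt (x := t))
    |g.eval t| (abs_pos.2 hgt)
  obtain ⟨ht1, ht2⟩ := ht
  rcases lt_or_gt_of_ne hgt with hneg | hposg
  · -- g t < 0 : take x slightly right of t
    set x := min b (t + δ/2) with hx
    have hxt : t < x := lt_min ht2 (by linarith)
    have hxI : x ∈ Set.Icc a b := ⟨by linarith, min_le_left _ _⟩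
    have hdist : dist x t < δ := by
      rw [Real.dist_eq, abs_of_pos (by linarith)]
      have : x ≤ t + δ/2 := min_le_right _ _
      linarith
    have hgx : g.eval x < 0 := by
      have := hδ2 hdist
      rw [Real.dist_eq] at this
      cases abs_lt.mp this with
      | intro h1 h2 => rw [abs_of_neg hneg] at h2; linarith
    have : p.eval x < 0 := by
      rw [hfac x]
      exact mul_neg_of_pos_of_neg (pow_pos (by linarith) m) hgx
    linarith [hpos x hxI]
  · -- g t > 0 : take x slightly left of t
    set x := max a (t - δ/2) with hx
    have hxt : x < t := max_lt ht1 (by linarith)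
    have hxI : x ∈ Set.Icc a b := ⟨le_max_left _ _, by linarith⟩
    have hdist : dist x t < δ := by
      rw [Real.dist_eq, abs_of_neg (by linarith)]
      have : t - δ/2 ≤ x := le_max_right _ _
      linarith
    have hgx : 0 < g.eval x := by
      have := hδ2 hdist
      rw [Real.dist_eq] at this
      cases abs_lt.mp this with
      | intro h1 h2 => rw [abs_of_pos hposg] at h1; linarith
    have : p.eval x < 0 := by
      rw [hfac x]
      exact mul_neg_of_neg_of_pos (hodd.pow_neg (by linarith)) hgx
    linarith [hpos x hxI]

private lemma sum_count_le {M : Multiset ℝ} (T : Finset ℝ) :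
    ∑ x ∈ T, M.count x ≤ Multiset.card M := by
  classical
  have h1 : ∑ x ∈ T, M.count x = ∑ x ∈ T.filter (· ∈ M.toFinset), M.count x := by
    rw [Finset.sum_filter]
    refine Finset.sum_congr rfl fun x _ => ?_
    by_cases h : x ∈ M.toFinset
    · simp [h]
    · simp [h, Multiset.count_eq_zero.mpr (fun hm => h (Multiset.mem_toFinset.mpr hm))]
  rw [h1]
  calc ∑ x ∈ T.filter (· ∈ M.toFinset), M.count x
      ≤ ∑ x ∈ M.toFinset, M.count x :=
        Finset.sum_le_sum_of_subset (fun x hx => (Finset.mem_filter.mp hx).2)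
    _ = Multiset.card M := Multiset.toFinset_sum_count_eq M

private lemma sum_rm_le {p : ℝ[X]} (hp : p ≠ 0) (T : Finset ℝ) :
    ∑ x ∈ T, p.rootMultiplicity x ≤ p.natDegree := by
  classical
  calc ∑ x ∈ T, p.rootMultiplicity x = ∑ x ∈ T, p.roots.count x := by
        refine Finset.sum_congr rfl fun x _ => (count_roots p).symm
    _ ≤ Multiset.card p.roots := sum_count_le T
    _ ≤ p.natDegree := p.card_roots'

private lemma upper {a b : ℝ} (hab : a < b) {n : ℕ} (hn : 3 ≤ n) :
    PosBasisWithDeg (Set.Icc a b) n (2 * n - 3) := by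
  classical
  have hn0 : 0 < n := by omega
  haveI : NeZero n := ⟨by omega⟩
  have hnR : (3:ℝ) ≤ (n:ℝ) := by exact_mod_cast hn
  have hn1 : (0:ℝ) < (n:ℝ) - 1 := by linarith
  have hba : (0:ℝ) < b - a := by linarith
  set t : Fin n → ℝ := fun i => a + (b - a) * i / ((n:ℝ) - 1) with ht
  have htmono : StrictMono t := by
    intro i j hij
    have h1 : (i:ℝ) < (j:ℝ) := by exact_mod_cast hij
    rw [ht]
    apply add_lt_add_right
    rw [div_lt_div_iff_of_pos_right hn1]
    exact mul_lt_mul_of_pos_left h1 hba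
  have htinj : Function.Injective t := htmono.injective
  set lst : Fin n := ⟨n - 1, by omega⟩ with hlst
  have hlst0 : lst ≠ 0 := by
    intro h
    have h2 := congrArg Fin.val h
    rw [hlst] at h2
    simp at h2
    omega
  have ht0 : t 0 = a := by
    simp only [ht]
    simp
  have htl : t lst = b := by
    have h1 : ((lst.val : ℕ) : ℝ) = (n:ℝ) - 1 := by
      rw [hlst]
      simp only [Fin.val_mk]
      push_cast [Nat.cast_sub (by omega : 1 ≤ n)]
      ring
    simp only [ht]
    rw [h1, mul_div_assoc, div_self hn1.ne', mul_one]
    ring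
  have htmem : ∀ i, t i ∈ Set.Icc a b := by
    intro i
    constructor
    · rw [← ht0]
      exact htmono.monotone (Fin.zero_le i)
    · rw [← htl]
      apply htmono.monotone
      rw [Fin.le_def, hlst]
      simp only [Fin.val_mk]
      omega
  set F : Fin n → ℝ[X] := fun i =>
    if i = 0 then X - C a else if i = lst then C b - X else (X - C (t i)) ^ 2 with hF
  have hFdeg : ∀ i, (F i).natDegree ≤ 2 ∧ 1 ≤ (F i).natDegree := by
    intro i
    simp only [hF]
    by_cases h0 : i = 0
    · simp [h0, natDegree_X_sub_C]
    · by_cases hl : i = lst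
      · have he : C b - X = -(X - C b) := by ring
        rw [if_neg h0, if_pos hl, he, natDegree_neg, natDegree_X_sub_C]
        omega
      · rw [if_neg h0, if_neg hl, natDegree_pow, natDegree_X_sub_C]
        omega
  have hFne : ∀ i, F i ≠ 0 := by
    intro i h0
    have := (hFdeg i).2
    rw [h0] at this
    simp at this
  -- sum of degrees
  have hsumdeg : ∑ i, (F i).natDegree = 2 * n - 2 := by
    rw [← Finset.add_sum_erase _ _ (Finset.mem_univ 0)]
    have hlmem : lst ∈ Finset.univ.erase (0 : Fin n) :=
      Finset.mem_erase.mpr ⟨hlst0, Finset.mem_univ _⟩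
    rw [← Finset.add_sum_erase _ _ hlmem]
    have hd0 : (F 0).natDegree = 1 := by
      simp only [hF]; simp [natDegree_X_sub_C]
    have hdl : (F lst).natDegree = 1 := by
      have he : F lst = -(X - C b) := by
        simp [hF, hlst0]
      rw [he, natDegree_neg, natDegree_X_sub_C]
    have hmid : ∀ i ∈ (Finset.univ.erase (0:Fin n)).erase lst, (F i).natDegree = 2 := by
      intro i hi
      have h1 := Finset.ne_of_mem_erase hi
      have h2 := Finset.ne_of_mem_erase (Finset.mem_of_mem_erase hi)
      simp only [hF]
      rw [if_neg h2, if_neg h1, natDegree_pow, natDegree_X_sub_C]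
    rw [Finset.sum_congr rfl hmid, Finset.sum_const, smul_eq_mul, hd0, hdl]
    have hcard : ((Finset.univ.erase (0:Fin n)).erase lst).card = n - 2 := by
      rw [Finset.card_erase_of_mem hlmem, Finset.card_erase_of_mem (Finset.mem_univ _)]
      simp only [Finset.card_univ, Fintype.card_fin]
      omega
    rw [hcard]
    omega
  set P : Fin n → ℝ[X] := fun j => ∏ i ∈ Finset.univ.erase j, F i with hP
  have hPdeg : ∀ j, (P j).natDegree ≤ 2 * n - 3 := by
    intro j
    calc (P j).natDegree ≤ ∑ i ∈ Finset.univ.erase j, (F i).natDegree :=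
          natDegree_prod_le _ _
      _ ≤ 2 * n - 3 := by
          have h1 : ∑ i ∈ Finset.univ.erase j, (F i).natDegree + (F j).natDegree
              = 2 * n - 2 := by
            rw [Finset.sum_erase_add _ _ (Finset.mem_univ j), hsumdeg]
          have h2 := (hFdeg j).2
          omega
  have hFnn : ∀ i, ∀ x ∈ Set.Icc a b, 0 ≤ (F i).eval x := by
    intro i x hx
    obtain ⟨hx1, hx2⟩ := hx
    simp only [hF]
    by_cases h0 : i = 0
    · simp [h0]; linarith
    · by_cases hl : i = lst
      · rw [if_neg h0, if_pos hl]
        simp; linarith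
      · rw [if_neg h0, if_neg hl]
        simp only [eval_pow, eval_sub, eval_X, eval_C]
        positivity
  have hPnn : ∀ j, ∀ x ∈ Set.Icc a b, 0 ≤ (P j).eval x := by
    intro j x hx
    simp only [hP]
    rw [eval_prod]
    exact Finset.prod_nonneg fun i _ => hFnn i x hx
  have hFzero : ∀ i, (F i).eval (t i) = 0 := by
    intro i
    simp only [hF]
    by_cases h0 : i = 0
    · simp [h0, ht0]
    · by_cases hl : i = lst
      · rw [if_neg h0, if_pos hl, hl, htl]
        simp
      · rw [if_neg h0, if_neg hl]
        simp
  have hFpos : ∀ i j, i ≠ j → 0 < (F i).eval (t j) := by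
    intro i j hij
    simp only [hF]
    by_cases h0 : i = 0
    · rw [if_pos h0]
      simp only [eval_sub, eval_X, eval_C]
      have hj : j ≠ 0 := fun h => hij (by rw [h0, h])
      have h1 : (0 : Fin n) < j := by
        rw [Fin.lt_def]
        have h2 : j.val ≠ 0 := fun h => hj (Fin.ext (by simpa using h))
        simp
        have h0v : ((0 : Fin n) : ℕ) = 0 := rfl
        omega
      have h3 := htmono h1
      rw [ht0] at h3
      linarith
    · rw [if_neg h0]
      by_cases hl : i = lst
      · rw [if_pos hl]
        simp only [eval_sub, eval_X, eval_C]
        have hjl : j < lst := by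
          rw [Fin.lt_def, hlst]
          simp only [Fin.val_mk]
          have h2 := j.isLt
          have h3 : j.val ≠ n - 1 := by
            intro h
            apply hij
            rw [hl, hlst]
            exact Fin.ext (by simpa using h.symm)
          omega
        have h4 := htmono hjl
        rw [htl] at h4
        linarith
      · rw [if_neg hl]
        simp only [eval_pow, eval_sub, eval_X, eval_C]
        have hne : t j - t i ≠ 0 := sub_ne_zero.mpr (fun h => hij (htinj h.symm))
        rcases (sq_nonneg (t j - t i)).lt_or_eq with h | h
        · exact h
        · exact absurd (pow_eq_zero_iff two_ne_zero |>.mp h.symm) hne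
  set bb : Fin n → (Set.Icc a b → ℝ) := fun j x => (P j).eval (x : ℝ) with hbb
  have hPti : ∀ j, 0 < (P j).eval (t j) := by
    intro j
    simp only [hP]
    rw [eval_prod]
    exact Finset.prod_pos fun i hi => hFpos i j (Finset.ne_of_mem_erase hi)
  have hPtz : ∀ i j, i ≠ j → (P j).eval (t i) = 0 := by
    intro i j hij
    simp only [hP]
    rw [eval_prod]
    exact Finset.prod_eq_zero (Finset.mem_erase.mpr ⟨hij, Finset.mem_univ i⟩) (hFzero i)
  have hsum_eval : ∀ (c : Fin n → ℝ) (x : Set.Icc a b),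
      (∑ i, c i • bb i) x = ∑ i, c i * (P i).eval (x : ℝ) := by
    intro c x
    rw [Finset.sum_apply]
    exact Finset.sum_congr rfl fun i _ => by rw [Pi.smul_apply, smul_eq_mul, hbb]
  have hLI : LinearIndependent ℝ bb := by
    rw [Fintype.linearIndependent_iff]
    intro g hg i
    have h1 := congrFun hg ⟨t i, htmem i⟩
    rw [hsum_eval] at h1
    rw [Finset.sum_eq_single i
      (fun j _ hji => by rw [hPtz i j (Ne.symm hji), mul_zero])
      (fun h => absurd (Finset.mem_univ i) h)] at h1
    simp only [Pi.zero_apply] at h1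
    exact (mul_eq_zero.mp h1).resolve_right (hPti i).ne'
  refine ⟨bb, fun j => ⟨P j, hPdeg j, fun x => rfl⟩, hLI, ?_⟩
  intro f hf
  obtain ⟨dc, hdc⟩ := (Submodule.mem_span_range_iff_exists_fun ℝ).mp hf
  constructor
  · intro hfnn
    refine ⟨dc, fun i => ?_, hdc.symm⟩
    have h1 := hfnn ⟨t i, htmem i⟩
    rw [← hdc, hsum_eval] at h1
    rw [Finset.sum_eq_single i
      (fun j _ hji => by rw [hPtz i j (Ne.symm hji), mul_zero])
      (fun h => absurd (Finset.mem_univ i) h)] at h1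
    nlinarith [hPti i, h1]
  · rintro ⟨c, hcnn, hcf⟩ x
    rw [hcf, hsum_eval]
    exact Finset.sum_nonneg fun i _ => mul_nonneg (hcnn i) (hPnn i x x.2)

private lemma lower_bound {a b : ℝ} (hab : a < b) {n d : ℕ} (hn : 3 ≤ n)
    (h : PosBasisWithDeg (Set.Icc a b) n d) : 2 * n - 3 ≤ d := by
  classical
  obtain ⟨bb, hdeg, hLI, hiff⟩ := h
  choose p hpd hpe using hdeg
  have hmem : ∀ i, bb i ∈ Submodule.span ℝ (Set.range bb) :=
    fun i => Submodule.subset_span ⟨i, rfl⟩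
  -- each basis function is nonnegative
  have hnn : ∀ i, ∀ x ∈ Set.Icc a b, 0 ≤ (p i).eval x := by
    intro i
    have h1 : ∀ x : Set.Icc a b, 0 ≤ bb i x := by
      apply (hiff _ (hmem i)).mpr
      refine ⟨fun j => if j = i then 1 else 0, fun j => by by_cases h : j = i <;> simp [h], ?_⟩
      have h2 : ∑ j, (if j = i then (1:ℝ) else 0) • bb j = bb i := by
        simp [ite_smul]
      exact h2.symm
    intro x hx
    have := h1 ⟨x, hx⟩
    rwa [hpe i ⟨x, hx⟩] at this
  have hpne : ∀ i, p i ≠ 0 := by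
    intro i h0
    refine hLI.ne_zero i (funext fun x => ?_)
    rw [hpe i x, h0]
    simp
  -- the node extraction
  have hnode : ∀ j : Fin n, ∃ t ∈ Set.Icc a b,
      ∀ i, i ≠ j → (p j).rootMultiplicity t < (p i).rootMultiplicity t := by
    intro j
    set q : ℝ[X] := ∑ i ∈ Finset.univ.erase j, p i with hq
    have hqnn : ∀ x ∈ Set.Icc a b, 0 ≤ q.eval x := by
      intro x hx
      rw [hq, eval_finset_sum]
      exact Finset.sum_nonneg fun i _ => hnn i x hx
    have hple : ∀ i, i ≠ j → ∀ x ∈ Set.Icc a b, (p i).eval x ≤ q.eval x := by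
      intro i hij x hx
      rw [hq, eval_finset_sum]
      exact Finset.single_le_sum (f := fun i => (p i).eval x)
        (fun k _ => hnn k x hx) (Finset.mem_erase.mpr ⟨hij, Finset.mem_univ i⟩)
    have hqne : q ≠ 0 := by
      intro h0
      have hnt : Nontrivial (Fin n) := Fin.nontrivial_iff_two_le.mpr (by omega)
      obtain ⟨i, hij⟩ := exists_ne j
      apply hpne i
      have hz : ∀ x ∈ Set.Icc a b, (p i).eval x = 0 := by
        intro x hx
        have h1 := hple i hij x hx
        rw [h0] at h1
        simp at h1
        exact le_antisymm h1 (hnn i x hx)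
      exact (p i).eq_zero_of_infinite_isRoot
        ((Set.Icc_infinite hab).mono (fun x hx => hz x hx))
    -- the epsilon property
    have heps : ∀ k : ℕ, ∃ x, x ∈ Set.Icc a b ∧
        ((k : ℝ) + 1) * q.eval x < (p j).eval x := by
      intro k
      by_contra hcon
      push_neg at hcon
      set c' : Fin n → ℝ := fun i => if i = j then -(1/((k:ℝ)+1)) else 1 with hc'
      set f : (Set.Icc a b) → ℝ := ∑ i, c' i • bb i with hf
      have hfmem : f ∈ Submodule.span ℝ (Set.range bb) :=
        Submodule.sum_mem _ fun i _ => Submodule.smul_mem _ _ (hmem i)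
      have hfval : ∀ x : Set.Icc a b,
          f x = q.eval (x:ℝ) - (1/((k:ℝ)+1)) * (p j).eval (x:ℝ) := by
        intro x
        rw [hf, Finset.sum_apply]
        have h1 : ∀ i : Fin n, (c' i • bb i) x = c' i * (p i).eval (x:ℝ) := by
          intro i
          rw [Pi.smul_apply, smul_eq_mul, hpe i x]
        rw [Finset.sum_congr rfl fun i _ => h1 i]
        rw [← Finset.sum_erase_add _ _ (Finset.mem_univ j)]
        have h2 : ∀ i ∈ Finset.univ.erase j, c' i * (p i).eval (x:ℝ) = (p i).eval (x:ℝ) := by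
          intro i hi
          rw [hc']
          simp [Finset.ne_of_mem_erase hi]
        rw [Finset.sum_congr rfl h2]
        have h3 : c' j = -(1/((k:ℝ)+1)) := by simp [hc']
        rw [h3, hq, eval_finset_sum]
        ring
      have hfnn : ∀ x : Set.Icc a b, 0 ≤ f x := by
        intro x
        rw [hfval x]
        have h1 := hcon (x:ℝ) x.2
        have h2 : (0:ℝ) < (k:ℝ) + 1 := by positivity
        rw [← sub_nonneg] at h1
        have h3 := div_nonneg h1 h2.le
        calc (0:ℝ) ≤ (((k:ℝ)+1) * q.eval (x:ℝ) - (p j).eval (x:ℝ)) / ((k:ℝ)+1) := h3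
          _ = q.eval (x:ℝ) - (1/((k:ℝ)+1)) * (p j).eval (x:ℝ) := by
            field_simp
      obtain ⟨c, hcnn, hcf⟩ := (hiff f hfmem).mp hfnn
      have hcc : ∀ i, c i - c' i = 0 := by
        apply Fintype.linearIndependent_iff.mp hLI
        rw [Finset.sum_congr rfl fun i _ => sub_smul (c i) (c' i) (bb i)]
        rw [Finset.sum_sub_distrib, ← hcf, hf, sub_self]
      have := hcnn j
      have h4 := hcc j
      have h5 : c' j = -(1/((k:ℝ)+1)) := by simp [hc']
      rw [h5] at h4
      have h6 : (0:ℝ) < 1/((k:ℝ)+1) := by positivity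
      linarith
    choose xs hxsI hxslt using heps
    obtain ⟨t, htI, φ, hφ, hφt⟩ := isCompact_Icc.tendsto_subseq hxsI
    refine ⟨t, htI, fun i hij => ?_⟩
    have hkey : (p j).rootMultiplicity t < q.rootMultiplicity t := by
      apply rm_lt_of_seq (hpne j) hqne hφt
        (fun k => hqnn _ (hxsI (φ k)))
      intro k
      calc ((k:ℝ)+1) * q.eval (xs (φ k))
          ≤ ((φ k : ℝ)+1) * q.eval (xs (φ k)) := by
            apply mul_le_mul_of_nonneg_right _ (hqnn _ (hxsI (φ k)))
            have hk : (k:ℝ) ≤ (φ k : ℝ) := Nat.cast_le.mpr hφ.le_apply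
            linarith
        _ < (p j).eval (xs (φ k)) := hxslt (φ k)
    have h7 : q.rootMultiplicity t ≤ (p i).rootMultiplicity t :=
      rm_le_of_le hab (hpne i) htI (fun x hx => ⟨hnn i x hx, hple i hij x hx⟩)
    omega
  -- collect nodes
  choose t htI hkey using hnode
  have htinj : Function.Injective t := by
    intro i j hij
    by_contra hne
    have h1 := hkey j i hne
    have h2 := hkey i j (fun h => hne h.symm)
    rw [hij] at h2
    omega
  set w : Fin n → ℕ := fun j => if t j ∈ Set.Ioo a b then 2 else 1 with hw
  have hwle : ∀ j i, i ≠ j → w j ≤ (p i).rootMultiplicity (t j) := by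
    intro j i hij
    have h1 := hkey j i hij
    rw [hw]
    by_cases hint : t j ∈ Set.Ioo a b
    · simp only [hint, if_true]
      have he := even_rm (hpne i) hint (hnn i)
      obtain ⟨r, hr⟩ := he
      omega
    · simp only [hint, if_false]
      omega
  -- the endpoint set
  set E : Finset (Fin n) := Finset.univ.filter (fun j => t j ∉ Set.Ioo a b) with hE
  have hcardE : E.card ≤ 2 := by
    have h1 : ∀ j ∈ E, t j ∈ ({a, b} : Finset ℝ) := by
      intro j hj
      rw [hE, Finset.mem_filter] at hj
      have h2 := htI j
      have h3 := hj.2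
      simp only [Set.mem_Icc] at h2
      simp only [Set.mem_Ioo, not_and_or, not_lt] at h3
      simp only [Finset.mem_insert, Finset.mem_singleton]
      rcases h3 with h3 | h3
      · left; linarith [h2.1]
      · right; linarith [h2.2]
    calc E.card ≤ ({a, b} : Finset ℝ).card :=
          Finset.card_le_card_of_injOn t h1 (fun x _ y _ hxy => htinj hxy)
      _ ≤ 2 := by
          have h4 := Finset.card_insert_le a ({b} : Finset ℝ)
          simpa using h4
  -- choose the index i
  have hmain : ∀ i : Fin n, ∑ j ∈ Finset.univ.erase i, w j ≤ d := by
    intro i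
    calc ∑ j ∈ Finset.univ.erase i, w j
        ≤ ∑ j ∈ Finset.univ.erase i, (p i).rootMultiplicity (t j) :=
          Finset.sum_le_sum fun j hj => hwle j i (Ne.symm (Finset.ne_of_mem_erase hj))
      _ = ∑ x ∈ (Finset.univ.erase i).image t, (p i).rootMultiplicity x := by
          rw [Finset.sum_image (fun x _ y _ hxy => htinj hxy)]
      _ ≤ (p i).natDegree := sum_rm_le (hpne i) _
      _ ≤ d := hpd i
  -- choose index i
  obtain ⟨i, hi⟩ : ∃ i : Fin n, E = ∅ ∨ i ∈ E := by
    rcases Finset.eq_empty_or_nonempty E with h | ⟨i, hi⟩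
    · exact ⟨⟨0, by omega⟩, Or.inl h⟩
    · exact ⟨i, Or.inr hi⟩
  refine le_trans ?_ (hmain i)
  set s : Finset (Fin n) := Finset.univ.erase i with hs
  have hcards : s.card = n - 1 := by
    rw [hs, Finset.card_erase_of_mem (Finset.mem_univ i)]
    simp
  have hsplit := Finset.sum_filter_add_sum_filter_not s (fun j => j ∈ E) w
  have hcc := Finset.card_filter_add_card_filter_not
    (s := s) (p := fun j => j ∈ E)
  have hc1 : (s.filter (fun j => j ∈ E)).card ≤ 1 := by
    rcases hi with h | hi
    · have he : s.filter (fun j => j ∈ E) = ∅ := by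
        rw [Finset.filter_eq_empty_iff]
        intro j _
        simp [h]
      simp [he]
    · have hsub : s.filter (fun j => j ∈ E) ⊆ E.erase i := by
        intro j hj
        rw [Finset.mem_filter] at hj
        exact Finset.mem_erase.mpr ⟨Finset.ne_of_mem_erase hj.1, hj.2⟩
      calc (s.filter (fun j => j ∈ E)).card ≤ (E.erase i).card :=
            Finset.card_le_card hsub
        _ = E.card - 1 := Finset.card_erase_of_mem hi
        _ ≤ 1 := by omega
  have h1 : ∀ j ∈ s.filter (fun j => j ∈ E), w j = 1 := by
    intro j hj
    have h2 := (Finset.mem_filter.mp hj).2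
    rw [hE, Finset.mem_filter] at h2
    show (if t j ∈ Set.Ioo a b then 2 else 1) = 1
    rw [if_neg h2.2]
  have h2 : ∀ j ∈ s.filter (fun j => ¬ j ∈ E), w j = 2 := by
    intro j hj
    have h3 := (Finset.mem_filter.mp hj).2
    rw [hE, Finset.mem_filter] at h3
    push_neg at h3
    have h4 : t j ∈ Set.Ioo a b := h3 (Finset.mem_univ j)
    show (if t j ∈ Set.Ioo a b then 2 else 1) = 2
    rw [if_pos h4]
  rw [← hsplit, Finset.sum_congr rfl h1, Finset.sum_congr rfl h2,
    Finset.sum_const, Finset.sum_const, smul_eq_mul, smul_eq_mul]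
  omega

/-- For `Ω = [a,b]` with `a < b` (the case `λ(Ω) = 0`) and `n ≥ 3`, the minimal possible
maximal degree of an `n`-element positive basis of an `n`-dimensional subspace of
polynomial functions on `[a,b]` is `d_n(Ω) = 2n - 3`. -/
theorem dn_interval (a b : ℝ) (hab : a < b) (n : ℕ) (hn : 3 ≤ n) :
    IsLeast {d | PosBasisWithDeg (Set.Icc a b) n d} (2 * n - 3) := by
  exact ⟨upper hab hn, fun d hd => lower_bound hab hn hd⟩
end
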